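/- Let (Ω, μ) be a measure space, m ≥ 1, and for 1 ≤ j ≤ m let (M_j, ν_j) be a measure space and p_j : Ω → M_j a measurable map. Fix D ∈ ℝ and c_j > 0. Let W be the set of probability densities f on Ω such that S(f) is finite and, for each j, (p_j)_#(f dμ) is absolutely continuous with respect to ν_j with density f_{(p_j)} of finite entropy, and let W₀ ⊆ W. Suppose every f ∈ W₀ satisfies ∑_{j=1}^{m} c_j S(f_{(p_j)}) ≤ S(f) + D. Then for all non-negative measurable functions f_j : M_j → [0,∞) such that ∫ f_j^{1/c_j} dν_j < ∞ for each j, 0 < ∫_Ω ∏_{j=1}^{m} f_j(p_j(x)) dμ(x) < ∞, and the normalized product (∏_{j=1}^{m} f_j∘p_j)/(∫_Ω ∏_{j=1}^{m} f_j∘p_j dμ) belongs to W₀, one has ∫_Ω ∏_{j=1}^{m} f_j(p_j(x)) dμ(x) ≤ e^D ∏_{j=1}^{m} (∫_{M_j} f_j^{1/c_j} dν_j)^{c_j}. -/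

import Mathlib

open MeasureTheory ENNReal

lemma BLaux_integral_withDensity {α : Type*} [MeasurableSpace α] {μ : Measure α}
    {ρ : α → ℝ} (hρ : Measurable ρ) (hρ0 : ∀ x, 0 ≤ ρ x) (ψ : α → ℝ) :
    ∫ x, ψ x ∂(μ.withDensity fun x => ENNReal.ofReal (ρ x)) = ∫ x, ρ x * ψ x ∂μ := by
  rw [show (fun x => ENNReal.ofReal (ρ x)) = (fun x => ((fun y => (ρ y).toNNReal) x : ℝ≥0∞)) from rfl,
    integral_withDensity_eq_integral_smul (by fun_prop) ψ]
  congr 1; ext x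
  simp [NNReal.smul_def, Real.coe_toNNReal _ (hρ0 x)]

lemma BLaux_integrable_withDensity {α : Type*} [MeasurableSpace α] {μ : Measure α}
    {ρ : α → ℝ} (hρ : Measurable ρ) (hρ0 : ∀ x, 0 ≤ ρ x) (ψ : α → ℝ) :
    Integrable ψ (μ.withDensity fun x => ENNReal.ofReal (ρ x)) ↔
      Integrable (fun x => ρ x * ψ x) μ := by
  have hmeas : Measurable fun y => (ρ y).toNNReal := by fun_prop
  have hiff := integrable_withDensity_iff_integrable_smul (μ := μ) hmeas (g := ψ)
  have hwd : (μ.withDensity fun x => ENNReal.ofReal (ρ x)) =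
      μ.withDensity fun x => ((ρ x).toNNReal : ℝ≥0∞) := rfl
  rw [hwd, hiff]
  apply integrable_congr
  filter_upwards with x
  simp [NNReal.smul_def, Real.coe_toNNReal _ (hρ0 x)]

lemma BLaux_lintegral_withDensity {α : Type*} [MeasurableSpace α] {μ : Measure α}
    {ρ : α → ℝ} (hρ : Measurable ρ) {Φ : α → ℝ≥0∞} (hΦ : Measurable Φ) :
    ∫⁻ x, Φ x ∂(μ.withDensity fun x => ENNReal.ofReal (ρ x)) =
      ∫⁻ x, ENNReal.ofReal (ρ x) * Φ x ∂μ := by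
  rw [lintegral_withDensity_eq_lintegral_mul _ (by fun_prop) hΦ]; rfl

/-- **Subadditivity of entropy implies Brascamp–Lieb** (Theorem 2.7(ii) of the
paper, after Carlen–Cordero-Erausquin): let `W₀` be a set of probability densities
on `Ω` contained in the class `W` (finite entropy, pushforwards under the `p_j`
absolutely continuous with densities of finite entropy). If every `f ∈ W₀`
satisfies the subadditivity `∑ c_j S(f_{(p_j)}) ≤ S(f) + D`, then the
Brascamp–Lieb inequality holds for all non-negative measurable `f_j` with
`∫ f_j^{1/c_j} dν_j < ∞`, `0 < ∫ ∏ f_j ∘ p_j dμ < ∞`, whose normalized product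
belongs to `W₀`. -/
theorem entropy_subadditivity_implies_brascamp_lieb
    {Ω : Type*} [MeasurableSpace Ω] (μ : Measure Ω)
    (m : ℕ) (hm : 1 ≤ m)
    (M : Fin m → Type*) [∀ j, MeasurableSpace (M j)] (ν : ∀ j, Measure (M j))
    (p : ∀ j, Ω → M j) (hp : ∀ j, Measurable (p j))
    (D : ℝ) (c : Fin m → ℝ) (hc : ∀ j, 0 < c j)
    (W₀ : Set (Ω → ℝ))
    (hW₀ : ∀ f ∈ W₀, Measurable f ∧ (∀ x, 0 ≤ f x) ∧
      (∫⁻ x, ENNReal.ofReal (f x) ∂μ) = 1 ∧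
      Integrable (fun x => f x * Real.log (f x)) μ ∧
      ∀ j, ∃ g : M j → ℝ, Measurable g ∧ (∀ t, 0 ≤ g t) ∧
        (μ.withDensity fun x => ENNReal.ofReal (f x)).map (p j) =
          (ν j).withDensity (fun t => ENNReal.ofReal (g t)) ∧
        Integrable (fun t => g t * Real.log (g t)) (ν j))
    (hsub : ∀ f ∈ W₀, ∀ fp : ∀ j, M j → ℝ,
      (∀ j, Measurable (fp j)) → (∀ j t, 0 ≤ fp j t) →
      (∀ j, (μ.withDensity fun x => ENNReal.ofReal (f x)).map (p j) =
        (ν j).withDensity fun t => ENNReal.ofReal (fp j t)) →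
      ∑ j, c j * ∫ t, fp j t * Real.log (fp j t) ∂ν j ≤
        (∫ x, f x * Real.log (f x) ∂μ) + D)
    (f : ∀ j, M j → ℝ) (hf : ∀ j, Measurable (f j)) (hf0 : ∀ j t, 0 ≤ f j t)
    (hfint : ∀ j, ∫⁻ t, ENNReal.ofReal (f j t ^ (1 / c j)) ∂ν j < ⊤)
    (hpos : 0 < ∫⁻ x, ∏ j, ENNReal.ofReal (f j (p j x)) ∂μ)
    (hfin : ∫⁻ x, ∏ j, ENNReal.ofReal (f j (p j x)) ∂μ < ⊤)
    (hmem : (fun x => (∏ j, f j (p j x)) /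
        (∫⁻ x', ∏ j, ENNReal.ofReal (f j (p j x')) ∂μ).toReal) ∈ W₀) :
    ∫⁻ x, ∏ j, ENNReal.ofReal (f j (p j x)) ∂μ ≤
      ENNReal.ofReal (Real.exp D) *
        ∏ j, (∫⁻ t, ENNReal.ofReal (f j t ^ (1 / c j)) ∂ν j) ^ (c j) := by
  classical
  set N := ∫⁻ x, ∏ j, ENNReal.ofReal (f j (p j x)) ∂μ with hNdef
  set G : Ω → ℝ := fun x => (∏ j, f j (p j x)) / N.toReal with hGdef
  obtain ⟨hGmeas, hG0, hGmass, hGent, hGpush⟩ := hW₀ G hmem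
  choose g hgmeas hg0 hgmap hgent using hGpush
  have hN0 : N ≠ 0 := hpos.ne'
  have hNtop : N ≠ ⊤ := hfin.ne
  have hI : 0 < N.toReal := ENNReal.toReal_pos hN0 hNtop
  set Nj : Fin m → ℝ≥0∞ := fun j => ∫⁻ t, ENNReal.ofReal (f j t ^ (1 / c j)) ∂ν j with hNjdef
  have hNjtop : ∀ j, Nj j ≠ ⊤ := fun j => (hfint j).ne
  set A : Fin m → ℝ := fun j => (Nj j).toReal with hAdef
  -- transfer of lintegrals along the pushforward identity
  have htrans : ∀ j, ∀ Φ : M j → ℝ≥0∞, Measurable Φ →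
      ∫⁻ x, ENNReal.ofReal (G x) * Φ (p j x) ∂μ =
        ∫⁻ t, ENNReal.ofReal (g j t) * Φ t ∂ν j := by
    intro j Φ hΦ
    have h1 : ∫⁻ x, ENNReal.ofReal (G x) * Φ (p j x) ∂μ
        = ∫⁻ x, Φ (p j x) ∂(μ.withDensity fun x => ENNReal.ofReal (G x)) :=
      (BLaux_lintegral_withDensity hGmeas (hΦ.comp (hp j))).symm
    have h2 : ∫⁻ x, Φ (p j x) ∂(μ.withDensity fun x => ENNReal.ofReal (G x))
        = ∫⁻ t, Φ t ∂((μ.withDensity fun x => ENNReal.ofReal (G x)).map (p j)) :=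
      (lintegral_map hΦ (hp j)).symm
    rw [h1, h2, hgmap j, BLaux_lintegral_withDensity (hgmeas j) hΦ]
  have hgmass : ∀ j, ∫⁻ t, ENNReal.ofReal (g j t) ∂ν j = 1 := by
    intro j
    have h := htrans j (fun _ => 1) measurable_const
    simpa [hGmass] using h.symm
  -- each Nj is positive
  have hNj0 : ∀ j, Nj j ≠ 0 := by
    intro j hzero
    have hfz : ∀ᵐ t ∂ν j, f j t = 0 := by
      have h1 : ∀ᵐ t ∂ν j, ENNReal.ofReal (f j t ^ (1 / c j)) = 0 :=
        (lintegral_eq_zero_iff (by fun_prop)).mp hzero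
      filter_upwards [h1] with t ht
      have h2 : f j t ^ (1 / c j) ≤ 0 := by simpa [ENNReal.ofReal_eq_zero] using ht
      have h3 : f j t ^ (1 / c j) = 0 :=
        le_antisymm h2 (Real.rpow_nonneg (hf0 j t) _)
      exact (Real.rpow_eq_zero (hf0 j t) (one_div_ne_zero (hc j).ne')).mp h3
    set s : Set (M j) := {t | f j t = 0} with hs
    have hsmeas : MeasurableSet s := (hf j) (measurableSet_singleton 0)
    have hcompl : (ν j) sᶜ = 0 := hfz
    have hind := htrans j (s.indicator fun _ => 1) (measurable_const.indicator hsmeas)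
    have hLHS : ∫⁻ x, ENNReal.ofReal (G x) * s.indicator (fun _ => (1:ℝ≥0∞)) (p j x) ∂μ = 0 := by
      have hz : ∀ x, ENNReal.ofReal (G x) * s.indicator (fun _ => (1:ℝ≥0∞)) (p j x) = 0 := by
        intro x
        by_cases hx : p j x ∈ s
        · have hfx : f j (p j x) = 0 := hx
          have hGx : G x = 0 := by
            simp only [hGdef, Finset.prod_eq_zero (f := fun k => f k (p k x)) (Finset.mem_univ j) hfx, zero_div]
          simp [hGx]
        · simp [Set.indicator_of_notMem hx]
      rw [lintegral_congr hz, lintegral_zero]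
    have hRHS : ∫⁻ t, ENNReal.ofReal (g j t) * s.indicator (fun _ => (1:ℝ≥0∞)) t ∂ν j
        = ∫⁻ t in s, ENNReal.ofReal (g j t) ∂ν j := by
      calc ∫⁻ t, ENNReal.ofReal (g j t) * s.indicator (fun _ => (1:ℝ≥0∞)) t ∂ν j
          = ∫⁻ t, s.indicator (fun t => ENNReal.ofReal (g j t)) t ∂ν j := by
            apply lintegral_congr
            intro t
            by_cases ht : t ∈ s <;> simp [ht]
        _ = ∫⁻ t in s, ENNReal.ofReal (g j t) ∂ν j := lintegral_indicator hsmeas _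
    have hone : (1:ℝ≥0∞) = 0 := by
      have hsplit := lintegral_add_compl (fun t => ENNReal.ofReal (g j t)) hsmeas (μ := ν j)
      rw [setLIntegral_measure_zero _ _ hcompl, add_zero, hgmass j] at hsplit
      rw [← hsplit, ← hRHS, ← hind, hLHS]
    exact one_ne_zero hone
  have hA : ∀ j, 0 < A j := fun j => ENNReal.toReal_pos (hNj0 j) (hNjtop j)
  -- a.e. on {G > 0} the densities g j are positive
  have haepos : ∀ j, ∀ᵐ x ∂μ, G x ≠ 0 → g j (p j x) ≠ 0 := by
    intro j
    set B : Set (M j) := {t | g j t = 0} with hB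
    have hBmeas : MeasurableSet B := (hgmeas j) (measurableSet_singleton 0)
    have hRHS0 : ∫⁻ t, ENNReal.ofReal (g j t) * B.indicator (fun _ => (1:ℝ≥0∞)) t ∂ν j = 0 := by
      have hz : ∀ t, ENNReal.ofReal (g j t) * B.indicator (fun _ => (1:ℝ≥0∞)) t = 0 := by
        intro t
        by_cases ht : t ∈ B
        · have : g j t = 0 := ht
          simp [this]
        · simp [Set.indicator_of_notMem ht]
      rw [lintegral_congr hz, lintegral_zero]
    have hLHS := htrans j (B.indicator fun _ => 1) (measurable_const.indicator hBmeas)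
    rw [hRHS0] at hLHS
    have hm : Measurable fun x =>
        ENNReal.ofReal (G x) * B.indicator (fun _ => (1:ℝ≥0∞)) (p j x) :=
      (measurable_ofReal.comp hGmeas).mul
        ((measurable_const.indicator hBmeas).comp (hp j))
    have hzero := (lintegral_eq_zero_iff hm).mp hLHS
    filter_upwards [hzero] with x hx hGx hgx
    have hmemB : p j x ∈ B := hgx
    simp only [Pi.zero_apply, Set.indicator_of_mem hmemB, mul_one,
      ENNReal.ofReal_eq_zero] at hx
    exact hGx (le_antisymm hx (hG0 x))
  -- the comparison functions
  set φ : ∀ j, M j → ℝ := fun j t => f j t ^ (1 / c j) / A j / g j t with hφdef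
  have hφmeas : ∀ j, Measurable (φ j) := by
    intro j
    simp only [hφdef]
    fun_prop
  have hφ0 : ∀ j t, 0 ≤ φ j t := fun j t =>
    div_nonneg (div_nonneg (Real.rpow_nonneg (hf0 j t) _) (hA j).le) (hg0 j t)
  have hKle : ∀ j, ∫⁻ x, ENNReal.ofReal (G x * φ j (p j x)) ∂μ ≤ 1 := by
    intro j
    have heq : ∀ x, ENNReal.ofReal (G x * φ j (p j x)) =
        ENNReal.ofReal (G x) * ENNReal.ofReal (φ j (p j x)) :=
      fun x => ENNReal.ofReal_mul (hG0 x)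
    rw [lintegral_congr heq, htrans j (fun t => ENNReal.ofReal (φ j t)) (by fun_prop)]
    have hle : ∫⁻ t, ENNReal.ofReal (g j t) * ENNReal.ofReal (φ j t) ∂ν j ≤
        ∫⁻ t, ENNReal.ofReal (f j t ^ (1 / c j) / A j) ∂ν j := by
      apply lintegral_mono
      intro t
      show ENNReal.ofReal (g j t) * ENNReal.ofReal (φ j t) ≤
        ENNReal.ofReal (f j t ^ (1 / c j) / A j)
      rw [← ENNReal.ofReal_mul (hg0 j t)]
      apply ENNReal.ofReal_le_ofReal
      rcases eq_or_ne (g j t) 0 with h0 | h0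
      · rw [h0, zero_mul]
        exact div_nonneg (Real.rpow_nonneg (hf0 j t) _) (hA j).le
      · simp only [hφdef]
        rw [mul_comm, div_mul_cancel₀ _ h0]
    refine hle.trans ?_
    have heq2 : ∀ t, ENNReal.ofReal (f j t ^ (1 / c j) / A j) =
        ENNReal.ofReal (f j t ^ (1 / c j)) * (ENNReal.ofReal (A j))⁻¹ := by
      intro t
      rw [div_eq_mul_inv, ENNReal.ofReal_mul (Real.rpow_nonneg (hf0 j t) _),
        ENNReal.ofReal_inv_of_pos (hA j)]
    rw [lintegral_congr heq2, lintegral_mul_const' _ _ (by simpa using hA j),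
      hAdef]
    simp only [ENNReal.ofReal_toReal (hNjtop j)]
    rw [ENNReal.mul_inv_cancel (hNj0 j) (hNjtop j)]
  have hKmeas : ∀ j, Measurable (fun x => G x * φ j (p j x)) :=
    fun j => hGmeas.mul ((hφmeas j).comp (hp j))
  have hKnonneg : ∀ j x, 0 ≤ G x * φ j (p j x) :=
    fun j x => mul_nonneg (hG0 x) (hφ0 j (p j x))
  have hKint : ∀ j, Integrable (fun x => G x * φ j (p j x)) μ := by
    intro j
    refine ⟨(hKmeas j).aestronglyMeasurable, ?_⟩
    rw [hasFiniteIntegral_iff_ofReal (ae_of_all _ (hKnonneg j))]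
    exact lt_of_le_of_lt (hKle j) ENNReal.one_lt_top
  have hKval : ∀ j, ∫ x, G x * φ j (p j x) ∂μ ≤ 1 := by
    intro j
    rw [integral_eq_lintegral_of_nonneg_ae (ae_of_all _ (hKnonneg j))
      (hKmeas j).aestronglyMeasurable]
    calc (∫⁻ x, ENNReal.ofReal (G x * φ j (p j x)) ∂μ).toReal
        ≤ (1 : ℝ≥0∞).toReal := ENNReal.toReal_mono ENNReal.one_ne_top (hKle j)
      _ = 1 := by simp
  -- integrability and normalization of G
  have hGint : Integrable G μ := by
    refine ⟨hGmeas.aestronglyMeasurable, ?_⟩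
    rw [hasFiniteIntegral_iff_ofReal (ae_of_all _ hG0), hGmass]
    exact ENNReal.one_lt_top
  have hGone : ∫ x, G x ∂μ = 1 := by
    rw [integral_eq_lintegral_of_nonneg_ae (ae_of_all _ hG0) hGmeas.aestronglyMeasurable, hGmass]
    simp
  -- transfer of the entropies of the g j
  have hEeq : ∀ j, ∫ t, g j t * Real.log (g j t) ∂ν j
      = ∫ x, G x * Real.log (g j (p j x)) ∂μ := by
    intro j
    have h1 : ∫ t, g j t * Real.log (g j t) ∂ν j
        = ∫ t, Real.log (g j t) ∂((ν j).withDensity fun t => ENNReal.ofReal (g j t)) :=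
      (BLaux_integral_withDensity (hgmeas j) (hg0 j) _).symm
    have h3 : ∫ t, Real.log (g j t)
          ∂((μ.withDensity fun x => ENNReal.ofReal (G x)).map (p j))
        = ∫ x, Real.log (g j (p j x)) ∂(μ.withDensity fun x => ENNReal.ofReal (G x)) :=
      integral_map (hp j).aemeasurable
        (Real.measurable_log.comp (hgmeas j)).aestronglyMeasurable
    have h4 : ∫ x, Real.log (g j (p j x)) ∂(μ.withDensity fun x => ENNReal.ofReal (G x))
        = ∫ x, G x * Real.log (g j (p j x)) ∂μ :=
      BLaux_integral_withDensity hGmeas hG0 _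
    rw [h1, ← hgmap j, h3, h4]
  have hEint : ∀ j, Integrable (fun x => G x * Real.log (g j (p j x))) μ := by
    intro j
    have h0 : Integrable (fun t => Real.log (g j t))
        ((ν j).withDensity fun t => ENNReal.ofReal (g j t)) :=
      (BLaux_integrable_withDensity (hgmeas j) (hg0 j) _).mpr (hgent j)
    rw [← hgmap j] at h0
    have h1 := (integrable_map_measure
      (Real.measurable_log.comp (hgmeas j)).aestronglyMeasurable
      (hp j).aemeasurable).mp h0
    exact (BLaux_integrable_withDensity hGmeas hG0 _).mp h1
  -- the subadditivity hypothesis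
  have hSub := hsub _ hmem g hgmeas hg0 hgmap
  have hL : ∑ j, c j * ∫ x, G x * Real.log (g j (p j x)) ∂μ ≤
      (∫ x, G x * Real.log (G x) ∂μ) + D := by
    calc ∑ j, c j * ∫ x, G x * Real.log (g j (p j x)) ∂μ
        = ∑ j, c j * ∫ t, g j t * Real.log (g j t) ∂ν j := by
          refine Finset.sum_congr rfl fun j _ => ?_
          rw [hEeq j]
      _ ≤ (∫ x, G x * Real.log (G x) ∂μ) + D := hSub
  -- main pointwise inequality and its integrated form
  have hmain : (∫ x, G x * Real.log (G x) ∂μ) + Real.log N.toReal ≤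
      (∑ j, c j * ∫ x, G x * Real.log (g j (p j x)) ∂μ) + ∑ j, c j * Real.log (A j) := by
    have hall : ∀ᵐ x ∂μ, ∀ j, G x ≠ 0 → g j (p j x) ≠ 0 := (ae_all_iff).mpr haepos
    have hae : ∀ᵐ x ∂μ,
        (G x * Real.log (G x) + Real.log N.toReal * G x)
          - (∑ j, c j * (G x * Real.log (g j (p j x))))
          - (∑ j, c j * Real.log (A j)) * G x
        ≤ ∑ j, c j * (G x * φ j (p j x) - G x) := by
      filter_upwards [hall] with x hx
      rcases (hG0 x).lt_or_eq with h0 | h0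
      · -- G x > 0
        have hGne : G x ≠ 0 := ne_of_gt h0
        have hFpos : 0 < ∏ k, f k (p k x) := by
          have hFx : ∏ k, f k (p k x) = G x * N.toReal := by
            simp only [hGdef]
            field_simp
          rw [hFx]
          positivity
        have hfk : ∀ k, 0 < f k (p k x) := by
          intro k
          rcases (hf0 k (p k x)).lt_or_eq with h | h
          · exact h
          · exfalso
            rw [Finset.prod_eq_zero (f := fun k => f k (p k x)) (Finset.mem_univ k) h.symm] at hFpos
            exact lt_irrefl _ hFpos
        have hgk : ∀ k, 0 < g k (p k x) :=
          fun k => lt_of_le_of_ne (hg0 k _) (Ne.symm (hx k hGne))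
        have hφpos : ∀ k, 0 < φ k (p k x) := fun k =>
          div_pos (div_pos (Real.rpow_pos_of_pos (hfk k) _) (hA k)) (hgk k)
        have hlogG : Real.log (G x) =
            Real.log (∏ k, f k (p k x)) - Real.log N.toReal := by
          simp only [hGdef]
          exact Real.log_div (ne_of_gt hFpos) (ne_of_gt hI)
        have hlogF : Real.log (∏ k, f k (p k x)) = ∑ k, Real.log (f k (p k x)) :=
          Real.log_prod (fun k _ => ne_of_gt (hfk k))
        have hlogφ : ∀ k, Real.log (φ k (p k x)) =
            (1 / c k) * Real.log (f k (p k x)) - Real.log (A k)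
              - Real.log (g k (p k x)) := by
          intro k
          simp only [hφdef]
          rw [Real.log_div (ne_of_gt (div_pos (Real.rpow_pos_of_pos (hfk k) _) (hA k)))
              (ne_of_gt (hgk k)),
            Real.log_div (ne_of_gt (Real.rpow_pos_of_pos (hfk k) _)) (ne_of_gt (hA k)),
            Real.log_rpow (hfk k)]
        have hLHSeq : (G x * Real.log (G x) + Real.log N.toReal * G x)
            - (∑ j, c j * (G x * Real.log (g j (p j x))))
            - (∑ j, c j * Real.log (A j)) * G x
            = ∑ j, c j * (G x * Real.log (φ j (p j x))) := by
          rw [hlogG, hlogF]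
          have hstep : (G x * ((∑ k, Real.log (f k (p k x))) - Real.log N.toReal)
                + Real.log N.toReal * G x)
              - (∑ j, c j * (G x * Real.log (g j (p j x))))
              - (∑ j, c j * Real.log (A j)) * G x
              = ∑ j, (G x * Real.log (f j (p j x))
                  - c j * (G x * Real.log (g j (p j x)))
                  - c j * Real.log (A j) * G x) := by
            rw [Finset.sum_sub_distrib, Finset.sum_sub_distrib, ← Finset.mul_sum,
              ← Finset.sum_mul]
            ring
          rw [hstep]
          refine Finset.sum_congr rfl fun j _ => ?_
          rw [hlogφ j]
          have hcj : c j ≠ 0 := (hc j).ne'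
          field_simp
          ring
        rw [hLHSeq]
        refine Finset.sum_le_sum fun j _ => ?_
        have h1 : Real.log (φ j (p j x)) ≤ φ j (p j x) - 1 :=
          Real.log_le_sub_one_of_pos (hφpos j)
        have h2 : G x * Real.log (φ j (p j x)) ≤ G x * (φ j (p j x) - 1) :=
          mul_le_mul_of_nonneg_left h1 (hG0 x)
        have h3 := mul_le_mul_of_nonneg_left h2 (hc j).le
        calc c j * (G x * Real.log (φ j (p j x)))
            ≤ c j * (G x * (φ j (p j x) - 1)) := h3
          _ = c j * (G x * φ j (p j x) - G x) := by ring
      · -- G x = 0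
        simp [← h0]
    have hint0 : Integrable (fun x => Real.log N.toReal * G x) μ := hGint.const_mul _
    have hint1 : Integrable (fun x => G x * Real.log (G x) + Real.log N.toReal * G x) μ :=
      hGent.add hint0
    have hintE : ∀ j : Fin m, Integrable (fun x => c j * (G x * Real.log (g j (p j x)))) μ :=
      fun j => (hEint j).const_mul _
    have hint2 : Integrable (fun x => ∑ j, c j * (G x * Real.log (g j (p j x)))) μ :=
      integrable_finset_sum _ fun j _ => hintE j
    have hint3 : Integrable (fun x => (∑ j, c j * Real.log (A j)) * G x) μ :=
      hGint.const_mul _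
    have hint12 : Integrable (fun x =>
        (G x * Real.log (G x) + Real.log N.toReal * G x)
          - (∑ j, c j * (G x * Real.log (g j (p j x))))) μ := hint1.sub hint2
    have hTint : Integrable (fun x =>
        (G x * Real.log (G x) + Real.log N.toReal * G x)
          - (∑ j, c j * (G x * Real.log (g j (p j x))))
          - (∑ j, c j * Real.log (A j)) * G x) μ := hint12.sub hint3
    have hintU : ∀ j : Fin m, Integrable (fun x => c j * (G x * φ j (p j x) - G x)) μ :=
      fun j => ((hKint j).sub hGint).const_mul _
    have hUint : Integrable (fun x => ∑ j, c j * (G x * φ j (p j x) - G x)) μ :=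
      integrable_finset_sum _ fun j _ => hintU j
    have hmono := integral_mono_ae hTint hUint hae
    have hUval : ∫ x, ∑ j, c j * (G x * φ j (p j x) - G x) ∂μ ≤ 0 := by
      rw [integral_finset_sum _ fun j _ => hintU j]
      apply Finset.sum_nonpos
      intro j _
      rw [integral_const_mul, integral_sub (hKint j) hGint, hGone]
      have hk := hKval j
      nlinarith [(hc j).le]
    have hTval : ∫ x, ((G x * Real.log (G x) + Real.log N.toReal * G x)
          - (∑ j, c j * (G x * Real.log (g j (p j x))))
          - (∑ j, c j * Real.log (A j)) * G x) ∂μ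
        = (∫ x, G x * Real.log (G x) ∂μ) + Real.log N.toReal
          - (∑ j, c j * ∫ x, G x * Real.log (g j (p j x)) ∂μ)
          - ∑ j, c j * Real.log (A j) := by
      rw [integral_sub hint12 hint3,
        integral_sub hint1 hint2,
        integral_add hGent hint0,
        integral_finset_sum _ fun j _ => hintE j,
        integral_const_mul, hGone]
      simp_rw [integral_const_mul]
      rw [hGone]
      ring
    rw [hTval] at hmono
    have := hmono.trans hUval
    linarith
  -- combine
  have hlogI : Real.log N.toReal ≤ D + ∑ j, c j * Real.log (A j) := by linarith
  have hIle : N.toReal ≤ Real.exp D * ∏ j, A j ^ c j := by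
    calc N.toReal = Real.exp (Real.log N.toReal) := (Real.exp_log hI).symm
      _ ≤ Real.exp (D + ∑ j, c j * Real.log (A j)) := Real.exp_le_exp.mpr hlogI
      _ = Real.exp D * ∏ j, A j ^ c j := by
          rw [Real.exp_add, Real.exp_sum]
          congr 1
          refine Finset.prod_congr rfl fun j _ => ?_
          rw [Real.rpow_def_of_pos (hA j), mul_comm]
  have hNeq : N = ENNReal.ofReal N.toReal := (ENNReal.ofReal_toReal hNtop).symm
  calc N = ENNReal.ofReal N.toReal := hNeq
    _ ≤ ENNReal.ofReal (Real.exp D * ∏ j, A j ^ c j) := ENNReal.ofReal_le_ofReal hIle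
    _ = ENNReal.ofReal (Real.exp D) * ∏ j, ENNReal.ofReal (A j ^ c j) := by
        rw [ENNReal.ofReal_mul (Real.exp_nonneg D),
          ENNReal.ofReal_prod_of_nonneg (fun j _ => Real.rpow_nonneg (hA j).le _)]
    _ = ENNReal.ofReal (Real.exp D) * ∏ j, (Nj j) ^ (c j) := by
        congr 1
        refine Finset.prod_congr rfl fun j _ => ?_
        rw [← ENNReal.ofReal_rpow_of_pos (hA j), hAdef]
        simp only [ENNReal.ofReal_toReal (hNjtop j)]
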